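/- Let ρ₁, ρ₂ > 0. For every (ℓ, h) ∈ ℝ² there exist (x, y, z) ∈ ℝ³ with x² + y² + z² = 1 and z > 0, and (u, v) ∈ ℝ², such that ρ₁·log|z| + (ρ₂/2)(u² + v²) = ℓ and (x·u + y·v)/2 = h. That is, the momentum map of the b-coupled spin-oscillator is already surjective when restricted to the open upper hemisphere times ℝ² (and by the symmetry (x,y,u,v) ↦ (−x,−y,−u,−v), likewise on the open lower hemisphere). -/

import Mathlib

/-- The momentum map `(L,H)` of the b-coupled spin-oscillator is already
surjective onto `ℝ²` when restricted to the open upper hemisphere times `ℝ²`. -/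
theorem bCSO_momentum_map_surjective_upper_hemisphere (ρ₁ ρ₂ : ℝ)
    (hρ₁ : 0 < ρ₁) (hρ₂ : 0 < ρ₂) (ℓ h : ℝ) :
    ∃ x y z u v : ℝ, x ^ 2 + y ^ 2 + z ^ 2 = 1 ∧ 0 < z ∧
      ρ₁ * Real.log |z| + (ρ₂ / 2) * (u ^ 2 + v ^ 2) = ℓ ∧
      (x * u + y * v) / 2 = h := by
  set z : ℝ := min (1/2) (Real.exp ((ℓ - 3 * h ^ 2 * ρ₂) / ρ₁)) with hzdef
  have hz0 : 0 < z := lt_min (by norm_num) (Real.exp_pos _)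
  have hzle : z ≤ 1/2 := min_le_left _ _
  have hz1 : z < 1 := lt_of_le_of_lt hzle (by norm_num)
  have hz2 : z ^ 2 ≤ (1/2 : ℝ) ^ 2 := by
    exact pow_le_pow_left₀ hz0.le hzle 2
  have h1z : (3/4 : ℝ) ≤ 1 - z ^ 2 := by nlinarith
  have h1zpos : (0 : ℝ) < 1 - z ^ 2 := by linarith
  set x : ℝ := Real.sqrt (1 - z ^ 2) with hxdef
  have hx0 : 0 < x := Real.sqrt_pos.mpr h1zpos
  have hxsq : x ^ 2 = 1 - z ^ 2 := Real.sq_sqrt h1zpos.le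
  -- bound on log z
  have hlog : Real.log z ≤ (ℓ - 3 * h ^ 2 * ρ₂) / ρ₁ := by
    calc Real.log z ≤ Real.log (Real.exp ((ℓ - 3 * h ^ 2 * ρ₂) / ρ₁)) :=
          Real.log_le_log hz0 (min_le_right _ _)
      _ = (ℓ - 3 * h ^ 2 * ρ₂) / ρ₁ := Real.log_exp _
  have hlog' : ρ₁ * Real.log z ≤ ℓ - 3 * h ^ 2 * ρ₂ := by
    have h2 : ρ₁ * ((ℓ - 3 * h ^ 2 * ρ₂) / ρ₁) = ℓ - 3 * h ^ 2 * ρ₂ := by field_simp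
    nlinarith [mul_le_mul_of_nonneg_left hlog hρ₁.le]
  set A : ℝ := 2 * (ℓ - ρ₁ * Real.log z) / ρ₂ with hAdef
  set u : ℝ := 2 * h / x with hudef
  have husq : u ^ 2 = 4 * h ^ 2 / (1 - z ^ 2) := by
    rw [hudef, div_pow, hxsq]; ring_nf
  have huA : u ^ 2 ≤ A := by
    have h6 : ℓ - ρ₁ * Real.log z ≥ 3 * h ^ 2 * ρ₂ := by linarith
    have hA6 : 6 * h ^ 2 ≤ A := by
      rw [hAdef, le_div_iff₀ hρ₂]; nlinarith
    have hu6 : u ^ 2 ≤ 6 * h ^ 2 := by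
      rw [husq, div_le_iff₀ h1zpos]; nlinarith
    linarith
  set v : ℝ := Real.sqrt (A - u ^ 2) with hvdef
  have hvsq : v ^ 2 = A - u ^ 2 := Real.sq_sqrt (by linarith)
  refine ⟨x, 0, z, u, v, ?_, hz0, ?_, ?_⟩
  · rw [hxsq]; ring
  · rw [abs_of_pos hz0, hvsq]
    have : u ^ 2 + (A - u ^ 2) = A := by ring
    rw [this, hAdef]
    field_simp
    ring
  · rw [hudef]; field_simp; ring
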